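/- For the Church numeral type Ent = ∀X((X→X)→(X→X)): a λ-term t belongs to |Ent| if and only if t β-reduces to a term t' with ⊢_F t' : Ent. In particular |Ent| = {t ∈ Λ : ∃t', t →_β t' and ⊢_F t' : Ent}. -/

import Mathlib

/-! Untyped λ-calculus (de Bruijn) and System F realizability semantics. -/

/-- Untyped λ-terms in de Bruijn notation. -/
inductive Lam : Type
  | var : ℕ → Lam
  | app : Lam → Lam → Lam
  | lam : Lam → Lam
deriving DecidableEq

namespace Lam

/-- Shift the free variables ≥ `d` up by one. -/
def lift (d : ℕ) : Lam → Lam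
  | var n => if n < d then var n else var (n + 1)
  | app t u => app (lift d t) (lift d u)
  | lam t => lam (lift (d + 1) t)

/-- Capture-avoiding substitution of `u` for the variable `k` (de Bruijn). -/
def subst : Lam → ℕ → Lam → Lam
  | var n, k, u => if n = k then u else if k < n then var (n - 1) else var n
  | app t s, k, u => app (subst t k u) (subst s k u)
  | lam t, k, u => lam (subst t (k + 1) (lift 0 u))

/-- Free variables of a term. -/
def fv : Lam → Finset ℕ
  | var n => {n}
  | app t u => fv t ∪ fv u
  | lam t => ((fv t).erase 0).image (· - 1)

/-- One-step β-reduction. -/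
inductive Beta : Lam → Lam → Prop
  | beta (t u : Lam) : Beta (app (lam t) u) (subst t 0 u)
  | appL {t t' : Lam} (u : Lam) : Beta t t' → Beta (app t u) (app t' u)
  | appR (t : Lam) {u u' : Lam} : Beta u u' → Beta (app t u) (app t u')
  | lam {t t' : Lam} : Beta t t' → Beta (lam t) (lam t')

/-- Many-step β-reduction. -/
def BetaStar : Lam → Lam → Prop := Relation.ReflTransGen Beta

/-- β-equivalence. -/
def BetaEq : Lam → Lam → Prop := Relation.EqvGen Beta

/-- One-step η-reduction. -/
inductive Eta : Lam → Lam → Prop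
  | eta (t : Lam) : Eta (lam (app (lift 0 t) (var 0))) t
  | appL {t t' : Lam} (u : Lam) : Eta t t' → Eta (app t u) (app t' u)
  | appR (t : Lam) {u u' : Lam} : Eta u u' → Eta (app t u) (app t u')
  | lam {t t' : Lam} : Eta t t' → Eta (lam t) (lam t')

/-- βη-equivalence. -/
def BetaEtaEq : Lam → Lam → Prop := Relation.EqvGen (fun t u => Beta t u ∨ Eta t u)

/-- One-step weak head reduction: contracts the weak head redex `(λ t) u`
possibly applied to further arguments. -/
inductive Whr : Lam → Lam → Prop
  | head (t u : Lam) : Whr (app (lam t) u) (subst t 0 u)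
  | appL {t t' : Lam} (u : Lam) : Whr t t' → Whr (app t u) (app t' u)

/-- Many-step weak head reduction (`≻_f`). -/
def WhrStar : Lam → Lam → Prop := Relation.ReflTransGen Whr

/-- A term is normal when it has no β-redex. -/
def Normal (t : Lam) : Prop := ∀ u, ¬ Beta t u

def Normalizable (t : Lam) : Prop := ∃ u, BetaStar t u ∧ Normal u

/-- `(t)v₁…vₘ`. -/
def appList (t : Lam) (l : List Lam) : Lam := l.foldl app t

end Lam

/-- A set of λ-terms is saturated when it is closed under weak-head-expansion. -/
def Saturated (G : Set Lam) : Prop := ∀ t u : Lam, Lam.WhrStar t u → u ∈ G → t ∈ G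

/-- A set of λ-terms is β-saturated when it is closed under β-expansion. -/
def BetaSaturated (G : Set Lam) : Prop := ∀ t u : Lam, Lam.BetaStar t u → u ∈ G → t ∈ G

/-- `G → G' = {u : ∀ t ∈ G, (u)t ∈ G'}`. -/
def arrowSet (G G' : Set Lam) : Set Lam := {u | ∀ t ∈ G, Lam.app u t ∈ G'}

/-- Types of System F (de Bruijn type variables). -/
inductive Ty : Type
  | var : ℕ → Ty
  | arr : Ty → Ty → Ty
  | all : Ty → Ty
deriving DecidableEq

namespace Ty

/-- Shift the free type variables ≥ `d` up by one. -/
def lift (d : ℕ) : Ty → Ty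
  | var n => if n < d then var n else var (n + 1)
  | arr A B => arr (lift d A) (lift d B)
  | all A => all (lift (d + 1) A)

/-- Capture-avoiding substitution of the type `C` for the type variable `k`. -/
def subst : Ty → ℕ → Ty → Ty
  | var n, k, C => if n = k then C else if k < n then var (n - 1) else var n
  | arr A B, k, C => arr (subst A k C) (subst B k C)
  | all A, k, C => all (subst A (k + 1) (lift 0 C))

/-- Free type variables. -/
def fv : Ty → Finset ℕ
  | var n => {n}
  | arr A B => fv A ∪ fv B
  | all A => ((fv A).erase 0).image (· - 1)

end Ty

mutual
  /-- ∀⁺ types: types with positive quantifiers. -/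
  inductive PosTy : Ty → Prop
    | var (n : ℕ) : PosTy (Ty.var n)
    | arr {B A : Ty} : NegTy B → PosTy A → PosTy (Ty.arr B A)
    | all {A : Ty} : PosTy A → 0 ∈ A.fv → PosTy (Ty.all A)
  /-- ∀⁻ types: types with negative quantifiers. -/
  inductive NegTy : Ty → Prop
    | var (n : ℕ) : NegTy (Ty.var n)
    | arr {B A : Ty} : PosTy B → NegTy A → NegTy (Ty.arr B A)
end

/-- Typing contexts: a partial assignment of types to (de Bruijn) term variables. -/
def Ctx : Type := ℕ → Option Ty

def Ctx.empty : Ctx := fun _ => none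

def Ctx.cons (B : Ty) (Γ : Ctx) : Ctx := fun n =>
  match n with
  | 0 => some B
  | n + 1 => Γ n

/-- Shift all type variables of a context (used for ∀-introduction: the fresh
type variable `0` does not occur in the shifted context). -/
def Ctx.liftTy (Γ : Ctx) : Ctx := fun n => (Γ n).map (Ty.lift 0)

/-- Curry-style typing of System F. -/
inductive TyJ : Ctx → Lam → Ty → Prop
  | var {Γ : Ctx} {x : ℕ} {A : Ty} : Γ x = some A → TyJ Γ (Lam.var x) A
  | lam {Γ : Ctx} {B C : Ty} {t : Lam} :
      TyJ (Ctx.cons B Γ) t C → TyJ Γ (Lam.lam t) (Ty.arr B C)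
  | app {Γ : Ctx} {B C : Ty} {u v : Lam} :
      TyJ Γ u (Ty.arr B C) → TyJ Γ v B → TyJ Γ (Lam.app u v) C
  | allI {Γ : Ctx} {A : Ty} {t : Lam} :
      TyJ (Ctx.liftTy Γ) t A → TyJ Γ t (Ty.all A)
  | allE {Γ : Ctx} {A : Ty} {t : Lam} (C : Ty) :
      TyJ Γ t (Ty.all A) → TyJ Γ t (Ty.subst A 0 C)

/-- System F0 : System F where ∀-elimination only instantiates by type variables. -/
inductive TyJ0 : Ctx → Lam → Ty → Prop
  | var {Γ : Ctx} {x : ℕ} {A : Ty} : Γ x = some A → TyJ0 Γ (Lam.var x) A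
  | lam {Γ : Ctx} {B C : Ty} {t : Lam} :
      TyJ0 (Ctx.cons B Γ) t C → TyJ0 Γ (Lam.lam t) (Ty.arr B C)
  | app {Γ : Ctx} {B C : Ty} {u v : Lam} :
      TyJ0 Γ u (Ty.arr B C) → TyJ0 Γ v B → TyJ0 Γ (Lam.app u v) C
  | allI {Γ : Ctx} {A : Ty} {t : Lam} :
      TyJ0 (Ctx.liftTy Γ) t A → TyJ0 Γ t (Ty.all A)
  | allE {Γ : Ctx} {A : Ty} {t : Lam} (Y : ℕ) :
      TyJ0 Γ t (Ty.all A) → TyJ0 Γ t (Ty.subst A 0 (Ty.var Y))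

/-- Interpretations: assignments of sets of λ-terms to type variables. -/
def Interp : Type := ℕ → Set Lam

def Interp.cons (G : Set Lam) (I : Interp) : Interp := fun n =>
  match n with
  | 0 => G
  | n + 1 => I n

/-- Interpretation of types, parameterized by the admissibility class `C` of
sets used to interpret type variables (e.g. `Saturated`). -/
def interpC (C : Set Lam → Prop) : Ty → Interp → Set Lam
  | Ty.var n, I => I n
  | Ty.arr A B, I => arrowSet (interpC C A I) (interpC C B I)
  | Ty.all A, I => ⋂ (G : Set Lam) (_ : C G), interpC C A (Interp.cons G I)

/-- Girard–Krivine interpretation `|A|_I` with saturated sets. -/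
def interp : Ty → Interp → Set Lam := interpC Saturated

/-- `|A|`, the intersection of `|A|_I` over all admissible interpretations. -/
def SemC (C : Set Lam → Prop) (A : Ty) : Set Lam :=
  {t | ∀ I : Interp, (∀ n, C (I n)) → t ∈ interpC C A I}

/-- `|A| = ⋂_I |A|_I` over interpretations into saturated sets. -/
def Sem (A : Ty) : Set Lam := SemC Saturated A

/-- `Ent = ∀X((X→X)→(X→X))`, the type of Church numerals. -/
def Ent : Ty :=
  Ty.all (Ty.arr (Ty.arr (Ty.var 0) (Ty.var 0)) (Ty.arr (Ty.var 0) (Ty.var 0)))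

namespace EntProof
open Lam

/-! ### Renamings and simultaneous substitutions -/

def upr (r : ℕ → ℕ) : ℕ → ℕ
  | 0 => 0
  | n+1 => r n + 1

def ren (r : ℕ → ℕ) : Lam → Lam
  | .var n => .var (r n)
  | .app t u => .app (ren r t) (ren r u)
  | .lam t => .lam (ren (upr r) t)

def ups (σ : ℕ → Lam) : ℕ → Lam
  | 0 => .var 0
  | n+1 => ren Nat.succ (σ n)

def msub (σ : ℕ → Lam) : Lam → Lam
  | .var n => σ n
  | .app t u => .app (msub σ t) (msub σ u)
  | .lam t => .lam (msub (ups σ) t)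

lemma upr_comp (r s : ℕ → ℕ) : upr (r ∘ s) = upr r ∘ upr s := by
  funext n; cases n <;> simp [upr]

lemma ren_ren (r s : ℕ → ℕ) (t : Lam) : ren r (ren s t) = ren (r ∘ s) t := by
  induction t generalizing r s with
  | var n => rfl
  | app a b iha ihb => simp [ren, iha, ihb]
  | lam a ih => simp [ren, ih, upr_comp]

lemma ups_comp_upr (σ : ℕ → Lam) (r : ℕ → ℕ) : ups σ ∘ upr r = ups (σ ∘ r) := by
  funext n; cases n <;> simp [ups, upr]

lemma msub_ren (σ : ℕ → Lam) (r : ℕ → ℕ) (t : Lam) :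
    msub σ (ren r t) = msub (σ ∘ r) t := by
  induction t generalizing σ r with
  | var n => rfl
  | app a b iha ihb => simp [ren, msub, iha, ihb]
  | lam a ih => simp [ren, msub, ih, ups_comp_upr]

lemma upr_ups (r : ℕ → ℕ) (σ : ℕ → Lam) :
    (fun n => ren (upr r) (ups σ n)) = ups (fun n => ren r (σ n)) := by
  funext n; cases n with
  | zero => simp [ups, ren, upr]
  | succ n =>
    show ren (upr r) (ren Nat.succ (σ n)) = ren Nat.succ (ren r (σ n))
    rw [ren_ren, ren_ren]
    have h : upr r ∘ Nat.succ = Nat.succ ∘ r := by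
      funext m; simp [upr, Function.comp]
    rw [h]

lemma ren_msub (r : ℕ → ℕ) (σ : ℕ → Lam) (t : Lam) :
    ren r (msub σ t) = msub (fun n => ren r (σ n)) t := by
  induction t generalizing σ r with
  | var n => rfl
  | app a b iha ihb => simp [ren, msub, iha, ihb]
  | lam a ih => simp [ren, msub, ih, upr_ups]

lemma ups_msub (σ τ : ℕ → Lam) :
    (fun n => msub (ups σ) (ups τ n)) = ups (fun n => msub σ (τ n)) := by
  funext n; cases n with
  | zero => simp [ups, msub]
  | succ n =>
    show msub (ups σ) (ren Nat.succ (τ n)) = ren Nat.succ (msub σ (τ n))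
    rw [msub_ren, ren_msub]
    have h : (ups σ ∘ Nat.succ) = (fun n => ren Nat.succ (σ n)) := by
      funext m; simp [ups, Function.comp]
    rw [h]

lemma msub_msub (σ τ : ℕ → Lam) (t : Lam) :
    msub σ (msub τ t) = msub (fun n => msub σ (τ n)) t := by
  induction t generalizing σ τ with
  | var n => rfl
  | app a b iha ihb => simp [msub, iha, ihb]
  | lam a ih => simp [msub, ih, ups_msub]

/-! ### `lift` and `subst` as renaming/substitution -/

def lr (d : ℕ) : ℕ → ℕ := fun n => if n < d then n else n + 1

def sb (k : ℕ) (u : Lam) : ℕ → Lam := fun n =>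
  if n = k then u else if k < n then .var (n - 1) else .var n

lemma lr_zero : lr 0 = Nat.succ := by
  funext n; simp [lr]

lemma upr_lr (d : ℕ) : upr (lr d) = lr (d+1) := by
  funext n; cases n with
  | zero => simp [upr, lr]
  | succ n =>
    simp only [upr, lr]
    split_ifs with h1 h2 h3 <;> omega

lemma lift_eq_ren (d : ℕ) (t : Lam) : lift d t = ren (lr d) t := by
  induction t generalizing d with
  | var n => simp only [lift, ren, lr, apply_ite Lam.var]
  | app a b iha ihb => simp [lift, ren, iha, ihb]
  | lam a ih => simp [lift, ren, ih, upr_lr]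

lemma ups_sb (k : ℕ) (u : Lam) : ups (sb k u) = sb (k+1) (lift 0 u) := by
  funext n; cases n with
  | zero => simp [ups, sb]
  | succ n =>
    show ren Nat.succ (sb k u n) = sb (k+1) (lift 0 u) (n+1)
    rw [lift_eq_ren, lr_zero]
    rcases eq_or_ne n k with h | h
    · subst h
      simp [sb]
    · have h4 : ¬ (n + 1 = k + 1) := by omega
      rcases Nat.lt_or_ge k n with h2 | h2
      · have h5 : k + 1 < n + 1 := by omega
        have h6 : n - 1 + 1 = n := by omega
        simp [sb, h, h4, h2, h5, ren, h6]
      · have h3 : ¬ k < n := by omega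
        have h5 : ¬ k + 1 < n + 1 := by omega
        simp [sb, h, h4, h3, h5, ren]

lemma subst_eq_msub (t : Lam) (k : ℕ) (u : Lam) : subst t k u = msub (sb k u) t := by
  induction t generalizing k u with
  | var n => simp [subst, msub, sb]
  | app a b iha ihb => simp [subst, msub, iha, ihb]
  | lam a ih => simp [subst, msub, ih, ups_sb]

lemma msub_var (t : Lam) : msub Lam.var t = t := by
  induction t with
  | var n => rfl
  | app a b iha ihb => simp [msub, iha, ihb]
  | lam a ih =>
    simp only [msub]
    congr 1
    have : ups Lam.var = Lam.var := by funext n; cases n <;> simp [ups, ren]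
    rw [this, ih]

/-! ### The key substitution identities -/

/-- I4 -/
lemma subst_lift (d : ℕ) (u v : Lam) : subst (lift d u) d v = u := by
  rw [lift_eq_ren, subst_eq_msub, msub_ren]
  have : (sb d v ∘ lr d) = Lam.var := by
    funext n
    simp only [sb, lr, Function.comp]
    split_ifs with h1 h2 h3 h4 h5 <;> first | (congr 1; omega) | omega | rfl
  rw [this, msub_var]

/-- I1: the critical-pair identity. -/
lemma subst_subst (p q u : Lam) (k : ℕ) :
    subst (subst p (k+1) (lift 0 u)) 0 (subst q k u) = subst (subst p 0 q) k u := by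
  simp only [subst_eq_msub, msub_msub]
  congr 1
  funext n
  cases n with
  | zero => simp [sb, msub]
  | succ n =>
    show msub (sb 0 (msub (sb k u) q)) (sb (k+1) (lift 0 u) (n+1)) = msub (sb k u) (sb 0 q (n+1))
    have hq : msub (sb k u) q = subst q k u := (subst_eq_msub q k u).symm
    rcases eq_or_ne n k with h | h
    · subst h
      have e1 : sb (n+1) (lift 0 u) (n+1) = lift 0 u := by simp [sb]
      have e2 : sb 0 q (n+1) = Lam.var n := by simp [sb]
      rw [e1, e2, hq]
      show msub (sb 0 (subst q n u)) (lift 0 u) = msub (sb n u) (Lam.var n)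
      rw [← subst_eq_msub, subst_lift]
      simp [msub, sb]
    · have h4 : ¬ (n + 1 = k + 1) := by omega
      rcases Nat.lt_or_ge k n with h2 | h2
      · have h5 : k + 1 < n + 1 := by omega
        have e1 : sb (k+1) (lift 0 u) (n+1) = Lam.var n := by simp [sb, h4, h5, h]
        have e2 : sb 0 q (n+1) = Lam.var n := by simp [sb]
        rw [e1, e2]
        have h7 : ¬ (n = 0) := by omega
        have h8 : (0:ℕ) < n := by omega
        simp [msub, sb, h7, h8, h, h2]
      · have h3 : ¬ k < n := by omega
        have h5 : ¬ k + 1 < n + 1 := by omega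
        have e1 : sb (k+1) (lift 0 u) (n+1) = Lam.var (n+1) := by simp [sb, h4, h5, h]
        have e2 : sb 0 q (n+1) = Lam.var n := by simp [sb]
        rw [e1, e2]
        simp [msub, sb, h, h3]

/-- I2 -/
lemma lift_subst (d : ℕ) (p q : Lam) :
    lift d (subst p 0 q) = subst (lift (d+1) p) 0 (lift d q) := by
  simp only [lift_eq_ren, subst_eq_msub, ren_msub, msub_ren]
  congr 1
  funext n
  cases n with
  | zero => simp [sb, lr, Function.comp]
  | succ n =>
    show ren (lr d) (sb 0 q (n+1)) = sb 0 (ren (lr d) q) (lr (d+1) (n+1))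
    have e2 : sb 0 q (n+1) = Lam.var n := by simp [sb]
    rw [e2]
    by_cases h : n < d
    · have h4 : n + 1 < d + 1 := by omega
      simp [ren, lr, h, h4, sb]
    · have h4 : ¬ (n + 1 < d + 1) := by omega
      simp [ren, lr, h, h4, sb]

/-- I5 -/
lemma subst_msub_ups (σ : ℕ → Lam) (b u : Lam) :
    subst (msub (ups σ) b) 0 u = msub (fun n => match n with | 0 => u | n+1 => σ n) b := by
  rw [subst_eq_msub, msub_msub]
  congr 1
  funext n
  cases n with
  | zero => simp [ups, msub, sb]
  | succ n =>
    simp only [ups, msub_ren]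
    have : (sb 0 u ∘ Nat.succ) = Lam.var := by
      funext m; simp [sb, Function.comp]
    rw [this, msub_var]

end EntProof
namespace EntProof
open Lam

/-! ### Congruence lemmas for star reductions -/

lemma betaStar_appL {t t' : Lam} (u : Lam) (h : BetaStar t t') :
    BetaStar (Lam.app t u) (Lam.app t' u) := by
  induction h with
  | refl => exact Relation.ReflTransGen.refl
  | tail _ hb ih => exact ih.tail (Beta.appL u hb)

lemma betaStar_appR (t : Lam) {u u' : Lam} (h : BetaStar u u') :
    BetaStar (Lam.app t u) (Lam.app t u') := by
  induction h with
  | refl => exact Relation.ReflTransGen.refl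
  | tail _ hb ih => exact ih.tail (Beta.appR t hb)

lemma betaStar_app {t t' u u' : Lam} (h : BetaStar t t') (h2 : BetaStar u u') :
    BetaStar (Lam.app t u) (Lam.app t' u') :=
  (betaStar_appL u h).trans (betaStar_appR t' h2)

lemma betaStar_lam {t t' : Lam} (h : BetaStar t t') :
    BetaStar (Lam.lam t) (Lam.lam t') := by
  induction h with
  | refl => exact Relation.ReflTransGen.refl
  | tail _ hb ih => exact ih.tail (Beta.lam hb)

lemma whr_beta {t u : Lam} (h : Whr t u) : Beta t u := by
  induction h with
  | head t u => exact Beta.beta t u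
  | appL u _ ih => exact Beta.appL u ih

lemma whrStar_betaStar {t u : Lam} (h : WhrStar t u) : BetaStar t u := by
  induction h with
  | refl => exact Relation.ReflTransGen.refl
  | tail _ hb ih => exact ih.tail (whr_beta hb)

lemma whrStar_appL {t t' : Lam} (u : Lam) (h : WhrStar t t') :
    WhrStar (Lam.app t u) (Lam.app t' u) := by
  induction h with
  | refl => exact Relation.ReflTransGen.refl
  | tail _ hb ih => exact ih.tail (Whr.appL u hb)

/-! ### Boundedness of free variables -/

inductive Bdd : ℕ → Lam → Prop
  | var {m n : ℕ} : n < m → Bdd m (Lam.var n)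
  | app {m : ℕ} {t u : Lam} : Bdd m t → Bdd m u → Bdd m (Lam.app t u)
  | lam {m : ℕ} {t : Lam} : Bdd (m+1) t → Bdd m (Lam.lam t)

lemma Bdd.mono {m m' : ℕ} {t : Lam} (h : Bdd m t) (hm : m ≤ m') : Bdd m' t := by
  induction h generalizing m' with
  | var h => exact Bdd.var (lt_of_lt_of_le h hm)
  | app _ _ ih1 ih2 => exact Bdd.app (ih1 hm) (ih2 hm)
  | lam _ ih => exact Bdd.lam (ih (by omega))

def bound : Lam → ℕ
  | .var n => n + 1
  | .app t u => max (bound t) (bound u)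
  | .lam t => bound t

lemma bdd_bound (t : Lam) : Bdd (bound t) t := by
  induction t with
  | var n => exact Bdd.var (by simp [bound])
  | app a b iha ihb =>
    exact Bdd.app (iha.mono (le_max_left _ _)) (ihb.mono (le_max_right _ _))
  | lam a ih => exact Bdd.lam (ih.mono (by simp [bound]))

lemma bdd_lift {m d : ℕ} {t : Lam} (h : Bdd m t) (hd : d ≤ m) : Bdd (m+1) (lift d t) := by
  induction h generalizing d with
  | @var _ n h =>
    simp only [lift]
    split
    · exact Bdd.var (by omega)
    · exact Bdd.var (by omega)
  | app _ _ ih1 ih2 => exact Bdd.app (ih1 hd) (ih2 hd)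
  | lam _ ih => exact Bdd.lam (ih (by omega))

lemma bdd_subst {m k : ℕ} {t u : Lam} (ht : Bdd (m+1) t) (hu : Bdd m u) (hk : k ≤ m) :
    Bdd m (subst t k u) := by
  induction t generalizing k u m with
  | var n =>
    rcases ht with ⟨h⟩ | _ | _
    simp only [subst]
    split
    · exact hu
    · split
      · exact Bdd.var (by omega)
      · rename_i h1 h2
        exact Bdd.var (by omega)
  | app a b iha ihb =>
    rcases ht with _ | ⟨h1, h2⟩ | _
    exact Bdd.app (iha h1 hu hk) (ihb h2 hu hk)
  | lam a ih =>
    rcases ht with _ | _ | ⟨h1⟩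
    exact Bdd.lam (ih h1 (bdd_lift hu (by omega)) (by omega))

lemma bdd_beta {m : ℕ} {t u : Lam} (h : Beta t u) (hb : Bdd m t) : Bdd m u := by
  induction h generalizing m with
  | beta t u =>
    rcases hb with _ | ⟨h1, h2⟩
    rename_i h1 h2
    rcases h1 with _ | _ | ⟨h3⟩
    exact bdd_subst h3 h2 (by omega)
  | appL u _ ih =>
    rcases hb with _ | ⟨h1, h2⟩
    rename_i h1 h2
    exact Bdd.app (ih h1) h2
  | appR t _ ih =>
    rcases hb with _ | ⟨h1, h2⟩
    rename_i h1 h2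
    exact Bdd.app h1 (ih h2)
  | lam _ ih =>
    rcases hb with _ | _ | ⟨h1⟩
    rename_i h1
    exact Bdd.lam (ih h1)

lemma bdd_betaStar {m : ℕ} {t u : Lam} (h : BetaStar t u) (hb : Bdd m t) : Bdd m u := by
  induction h with
  | refl => exact hb
  | tail _ hs ih => exact bdd_beta hs ih

lemma bdd_whrStar {m : ℕ} {t u : Lam} (h : WhrStar t u) (hb : Bdd m t) : Bdd m u :=
  bdd_betaStar (whrStar_betaStar h) hb

/-! ### Whr basic lemmas -/

lemma whr_shape {a b : Lam} (h : Whr a b) : ∃ s u, a = Lam.app s u := by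
  induction h with
  | head t u => exact ⟨_, _, rfl⟩
  | appL u _ _ => exact ⟨_, _, rfl⟩

lemma not_whr_var {n : ℕ} {v : Lam} (h : Whr (Lam.var n) v) : False := by
  obtain ⟨s, u, hs⟩ := whr_shape h
  exact Lam.noConfusion hs

lemma not_whr_lam {t v : Lam} (h : Whr (Lam.lam t) v) : False := by
  obtain ⟨s, u, hs⟩ := whr_shape h
  exact Lam.noConfusion hs

lemma whrStar_var {n : ℕ} {v : Lam} (h : WhrStar (Lam.var n) v) : v = Lam.var n := by
  rcases Relation.ReflTransGen.cases_head h with h | ⟨c, hc, _⟩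
  · exact h.symm
  · exact absurd hc not_whr_var

lemma whrStar_lam_inv {t v : Lam} (h : WhrStar (Lam.lam t) v) : v = Lam.lam t := by
  rcases Relation.ReflTransGen.cases_head h with h | ⟨c, hc, _⟩
  · exact h.symm
  · exact absurd hc not_whr_lam

lemma whr_subst {a b : Lam} (h : Whr a b) (k : ℕ) (u : Lam) :
    Whr (subst a k u) (subst b k u) := by
  induction h generalizing k u with
  | head t s =>
    have : subst (subst t 0 s) k u
        = subst (subst t (k+1) (lift 0 u)) 0 (subst s k u) := (subst_subst t s u k).symm
    simp only [subst]
    rw [this]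
    exact Whr.head _ _
  | appL s _ ih =>
    simp only [subst]
    exact Whr.appL _ (ih k u)

lemma whrStar_subst {a b : Lam} (h : WhrStar a b) (k : ℕ) (u : Lam) :
    WhrStar (subst a k u) (subst b k u) := by
  induction h with
  | refl => exact Relation.ReflTransGen.refl
  | tail _ hs ih => exact ih.tail (whr_subst hs k u)

lemma whr_lift {a b : Lam} (h : Whr a b) (d : ℕ) : Whr (lift d a) (lift d b) := by
  induction h generalizing d with
  | head t s =>
    simp only [lift]
    rw [lift_subst d t s]
    exact Whr.head _ _
  | appL s _ ih =>
    simp only [lift]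
    exact Whr.appL _ (ih d)

lemma whrStar_lift {a b : Lam} (h : WhrStar a b) (d : ℕ) :
    WhrStar (lift d a) (lift d b) := by
  induction h with
  | refl => exact Relation.ReflTransGen.refl
  | tail _ hs ih => exact ih.tail (whr_lift hs d)

/-- Tracking of weak head reduction from an application. -/
lemma whrStar_app_track {v w : Lam} (h : WhrStar v w) :
    ∀ s u : Lam, v = Lam.app s u →
      (∃ p, w = Lam.app p u ∧ WhrStar s p) ∨
      (∃ b, WhrStar s (Lam.lam b) ∧ WhrStar (subst b 0 u) w) := by
  induction h using Relation.ReflTransGen.head_induction_on with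
  | refl =>
    intro s u hv
    exact Or.inl ⟨s, hv, Relation.ReflTransGen.refl⟩
  | @head v' z hs hz ih =>
    intro s u hv
    subst hv
    cases hs with
    | head b u =>
      exact Or.inr ⟨b, Relation.ReflTransGen.refl, hz⟩
    | @appL _ s' _ hss =>
      rcases ih s' u rfl with ⟨p, hw, hsp⟩ | ⟨b, hlam, hsub⟩
      · exact Or.inl ⟨p, hw, Relation.ReflTransGen.head hss hsp⟩
      · exact Or.inr ⟨b, Relation.ReflTransGen.head hss hlam, hsub⟩

end EntProof
namespace EntProof
open Lam

/-! ### Shape lemmas for substitution by a variable -/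

lemma lift_var_zero (j : ℕ) : lift 0 (Lam.var j) = Lam.var (j+1) := by
  simp [lift]

lemma subst_eq_lam {a p : Lam} {k j : ℕ} (h : subst a k (Lam.var j) = Lam.lam p) :
    ∃ a₀, a = Lam.lam a₀ ∧ p = subst a₀ (k+1) (Lam.var (j+1)) := by
  cases a with
  | var n =>
    simp only [subst] at h
    split_ifs at h <;> exact Lam.noConfusion h
  | app a₁ a₂ =>
    simp only [subst] at h
    exact Lam.noConfusion h
  | lam a₀ =>
    simp only [subst, lift_var_zero] at h
    injection h with h'
    exact ⟨a₀, rfl, h'.symm⟩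

lemma subst_eq_app {a p q : Lam} {k j : ℕ} (h : subst a k (Lam.var j) = Lam.app p q) :
    ∃ a₁ a₂, a = Lam.app a₁ a₂ ∧ p = subst a₁ k (Lam.var j) ∧ q = subst a₂ k (Lam.var j) := by
  cases a with
  | var n =>
    simp only [subst] at h
    split_ifs at h <;> exact Lam.noConfusion h
  | app a₁ a₂ =>
    simp only [subst] at h
    injection h with h1 h2
    exact ⟨a₁, a₂, rfl, h1.symm, h2.symm⟩
  | lam a₀ =>
    simp only [subst] at h
    exact Lam.noConfusion h

lemma subst_eq_var {a : Lam} {k j i : ℕ} (h : subst a k (Lam.var j) = Lam.var i) :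
    ∃ n, a = Lam.var n := by
  cases a with
  | var n => exact ⟨n, rfl⟩
  | app a₁ a₂ => simp only [subst] at h; exact Lam.noConfusion h
  | lam a₀ => simp only [subst] at h; exact Lam.noConfusion h

/-! ### Reflection of weak head reduction along a variable substitution -/

lemma whr_reflect {s w : Lam} (h : Whr s w) :
    ∀ (a : Lam) (k j : ℕ), s = subst a k (Lam.var j) →
      ∃ a', Whr a a' ∧ w = subst a' k (Lam.var j) := by
  induction h with
  | head t u =>
    intro a k j hs
    obtain ⟨a₁, a₂, rfl, h1, h2⟩ := subst_eq_app hs.symm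
    obtain ⟨a₀, rfl, h3⟩ := subst_eq_lam h1.symm
    refine ⟨subst a₀ 0 a₂, Whr.head _ _, ?_⟩
    rw [h3, h2]
    have := subst_subst a₀ a₂ (Lam.var j) k
    rw [lift_var_zero] at this
    exact this
  | @appL t t' u hw ih =>
    intro a k j hs
    obtain ⟨a₁, a₂, rfl, h1, h2⟩ := subst_eq_app hs.symm
    obtain ⟨a₁', hw', rfl⟩ := ih a₁ k j h1
    exact ⟨Lam.app a₁' a₂, Whr.appL _ hw', by simp [subst, h2]⟩

lemma whrStar_reflect {a w : Lam} {k j : ℕ} (h : WhrStar (subst a k (Lam.var j)) w) :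
    ∃ a', WhrStar a a' ∧ w = subst a' k (Lam.var j) := by
  generalize hs : subst a k (Lam.var j) = s at h
  induction h generalizing a with
  | refl => exact ⟨a, Relation.ReflTransGen.refl, hs.symm⟩
  | @tail b c hbc hc ih =>
    obtain ⟨a', ha', rfl⟩ := ih hs
    obtain ⟨a'', ha'', rfl⟩ := whr_reflect hc a' k j rfl
    exact ⟨a'', ha'.tail ha'', rfl⟩

/-! ### Standard reductions -/

inductive Sred : Lam → Lam → Prop
  | var {s : Lam} {n : ℕ} : WhrStar s (Lam.var n) → Sred s (Lam.var n)
  | app {s p q w₁ w₂ : Lam} :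
      WhrStar s (Lam.app p q) → Sred p w₁ → Sred q w₂ → Sred s (Lam.app w₁ w₂)
  | lam {s p w₀ : Lam} : WhrStar s (Lam.lam p) → Sred p w₀ → Sred s (Lam.lam w₀)

lemma sred_refl (s : Lam) : Sred s s := by
  induction s with
  | var n => exact Sred.var Relation.ReflTransGen.refl
  | app a b iha ihb => exact Sred.app Relation.ReflTransGen.refl iha ihb
  | lam a ih => exact Sred.lam Relation.ReflTransGen.refl ih

lemma sred_whr_prepend {s s' w : Lam} (h : WhrStar s s') (hs : Sred s' w) : Sred s w := by
  cases hs with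
  | var h2 => exact Sred.var (h.trans h2)
  | app h2 hp hq => exact Sred.app (h.trans h2) hp hq
  | lam h2 hp => exact Sred.lam (h.trans h2) hp

lemma sred_inv_var {s : Lam} {n : ℕ} (h : Sred s (Lam.var n)) : WhrStar s (Lam.var n) := by
  cases h with
  | var h2 => exact h2

lemma sred_inv_app {s w₁ w₂ : Lam} (h : Sred s (Lam.app w₁ w₂)) :
    ∃ p q, WhrStar s (Lam.app p q) ∧ Sred p w₁ ∧ Sred q w₂ := by
  cases h with
  | app h2 hp hq => exact ⟨_, _, h2, hp, hq⟩

lemma sred_inv_lam {s w₀ : Lam} (h : Sred s (Lam.lam w₀)) :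
    ∃ p, WhrStar s (Lam.lam p) ∧ Sred p w₀ := by
  cases h with
  | lam h2 hp => exact ⟨_, h2, hp⟩

lemma sred_lift {b b' : Lam} (h : Sred b b') (d : ℕ) : Sred (lift d b) (lift d b') := by
  induction h generalizing d with
  | @var s n hw =>
    have h1 := whrStar_lift hw d
    by_cases hn : n < d
    · have : lift d (Lam.var n) = Lam.var n := by simp [lift, hn]
      rw [this] at h1 ⊢
      exact Sred.var h1
    · have : lift d (Lam.var n) = Lam.var (n+1) := by simp [lift, hn]
      rw [this] at h1 ⊢
      exact Sred.var h1
  | @app s p q w₁ w₂ hw hp hq ihp ihq =>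
    have h1 := whrStar_lift hw d
    simp only [lift] at h1 ⊢
    exact Sred.app h1 (ihp d) (ihq d)
  | @lam s p w₀ hw hp ihp =>
    have h1 := whrStar_lift hw d
    simp only [lift] at h1 ⊢
    exact Sred.lam h1 (ihp (d+1))

lemma sred_subst {a a' : Lam} (h : Sred a a') :
    ∀ (k : ℕ) (b b' : Lam), Sred b b' → Sred (subst a k b) (subst a' k b') := by
  induction h with
  | @var s n hw =>
    intro k b b' hb
    have h1 : WhrStar (subst s k b) (subst (Lam.var n) k b) := whrStar_subst hw k b
    rcases eq_or_ne n k with h2 | h2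
    · subst h2
      have e1 : subst (Lam.var n) n b = b := by simp [subst]
      have e2 : subst (Lam.var n) n b' = b' := by simp [subst]
      rw [e1] at h1
      rw [e2]
      exact sred_whr_prepend h1 hb
    · rcases Nat.lt_or_ge k n with h3 | h3
      · have e1 : subst (Lam.var n) k b = Lam.var (n-1) := by simp [subst, h2, h3]
        have e2 : subst (Lam.var n) k b' = Lam.var (n-1) := by simp [subst, h2, h3]
        rw [e1] at h1
        rw [e2]
        exact Sred.var h1
      · have h4 : ¬ k < n := by omega
        have e1 : subst (Lam.var n) k b = Lam.var n := by simp [subst, h2, h4]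
        have e2 : subst (Lam.var n) k b' = Lam.var n := by simp [subst, h2, h4]
        rw [e1] at h1
        rw [e2]
        exact Sred.var h1
  | @app s p q w₁ w₂ hw hp hq ihp ihq =>
    intro k b b' hb
    have h1 := whrStar_subst hw k b
    simp only [subst] at h1 ⊢
    exact Sred.app h1 (ihp k b b' hb) (ihq k b b' hb)
  | @lam s p w₀ hw hp ihp =>
    intro k b b' hb
    have h1 := whrStar_subst hw k b
    simp only [subst] at h1 ⊢
    exact Sred.lam h1 (ihp (k+1) (lift 0 b) (lift 0 b') (sred_lift hb 0))

lemma beta_shape {a b : Lam} (h : Beta a b) :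
    (∃ s u, a = Lam.app s u) ∨ (∃ t, a = Lam.lam t) := by
  induction h with
  | beta t u => exact Or.inl ⟨_, _, rfl⟩
  | appL u _ _ => exact Or.inl ⟨_, _, rfl⟩
  | appR t _ _ => exact Or.inl ⟨_, _, rfl⟩
  | lam _ _ => exact Or.inr ⟨_, rfl⟩

lemma not_beta_var {n : ℕ} {w : Lam} (h : Beta (Lam.var n) w) : False := by
  rcases beta_shape h with ⟨s, u, hs⟩ | ⟨t, hs⟩ <;> exact Lam.noConfusion hs

lemma sred_beta_right {s w w' : Lam} (h : Sred s w) (hb : Beta w w') : Sred s w' := by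
  induction h generalizing w' with
  | @var s n hw => exact absurd hb not_beta_var
  | @app s p q w₁ w₂ hw hp hq ihp ihq =>
    cases hb with
    | beta r u =>
      obtain ⟨p₀, hp₀, hp₀r⟩ := sred_inv_lam hp
      have hs : WhrStar s (subst p₀ 0 q) :=
        (hw.trans (whrStar_appL q hp₀)).tail (Whr.head p₀ q)
      exact sred_whr_prepend hs (sred_subst hp₀r 0 q w₂ hq)
    | appL u hb' => exact Sred.app hw (ihp hb') hq
    | appR t hb' => exact Sred.app hw hp (ihq hb')
  | @lam s p w₀ hw hp ihp =>
    cases hb with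
    | lam hb' => exact Sred.lam hw (ihp hb')

lemma sred_of_betaStar {s w : Lam} (h : BetaStar s w) : Sred s w := by
  induction h with
  | refl => exact sred_refl s
  | tail _ hb ih => exact sred_beta_right ih hb

end EntProof
namespace EntProof
open Lam

/-! ### Church numeral bodies -/

/-- Church body with `var 1` for `f` and `var 0` for `x`. -/
def Cb : ℕ → Lam
  | 0 => .var 0
  | n+1 => .app (.var 1) (Cb n)

/-- Church body with free variables `var (m+1)` for `f` and `var m` for `x`. -/
def cm (m : ℕ) : ℕ → Lam
  | 0 => .var m
  | n+1 => .app (.var (m+1)) (cm m n)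

/-- The composite renaming substitution `0 ↦ m`, `1 ↦ m+1`, `k+2 ↦ k`. -/
def sg (m : ℕ) (e : Lam) : Lam := subst (subst e 1 (Lam.var (m+2))) 0 (Lam.var m)

lemma sg_var_zero (m : ℕ) : sg m (Lam.var 0) = Lam.var m := by
  simp [sg, subst]

lemma sg_var_one (m : ℕ) : sg m (Lam.var 1) = Lam.var (m+1) := by
  simp [sg, subst]

lemma sg_var_ge (m k : ℕ) : sg m (Lam.var (k+2)) = Lam.var k := by
  simp [sg, subst]

lemma sg_app (m : ℕ) (e₁ e₂ : Lam) :
    sg m (Lam.app e₁ e₂) = Lam.app (sg m e₁) (sg m e₂) := by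
  simp [sg, subst]

lemma whrStar_reflect_sg {e w : Lam} {m : ℕ} (h : WhrStar (sg m e) w) :
    ∃ e', WhrStar e e' ∧ w = sg m e' := by
  obtain ⟨i', hi, rfl⟩ := whrStar_reflect h
  obtain ⟨e', he, rfl⟩ := whrStar_reflect hi
  exact ⟨e', he, rfl⟩

lemma sg_eq_app {e p q : Lam} {m : ℕ} (h : sg m e = Lam.app p q) :
    ∃ e₁ e₂, e = Lam.app e₁ e₂ ∧ p = sg m e₁ ∧ q = sg m e₂ := by
  obtain ⟨i₁, i₂, hi, hp, hq⟩ := subst_eq_app h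
  obtain ⟨e₁, e₂, he, h1, h2⟩ := subst_eq_app hi
  subst he
  exact ⟨e₁, e₂, rfl, by rw [hp, h1]; rfl, by rw [hq, h2]; rfl⟩

lemma sg_eq_var_m {e : Lam} {m : ℕ} (hb : Bdd (m+2) e) (h : sg m e = Lam.var m) :
    e = Lam.var 0 := by
  obtain ⟨i, hi⟩ := subst_eq_var h
  obtain ⟨n, hn⟩ := subst_eq_var hi
  subst hn
  cases hb with
  | var hlt =>
    match n, hlt with
    | 0, _ => rfl
    | 1, _ => rw [sg_var_one] at h; exact absurd (Lam.var.inj h) (by omega)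
    | (k+2), hlt => rw [sg_var_ge] at h; exact absurd (Lam.var.inj h) (by omega)

lemma sg_eq_var_m1 {e : Lam} {m : ℕ} (hb : Bdd (m+2) e) (h : sg m e = Lam.var (m+1)) :
    e = Lam.var 1 := by
  obtain ⟨i, hi⟩ := subst_eq_var h
  obtain ⟨n, hn⟩ := subst_eq_var hi
  subst hn
  cases hb with
  | var hlt =>
    match n, hlt with
    | 0, _ => rw [sg_var_zero] at h; exact absurd (Lam.var.inj h) (by omega)
    | 1, _ => rfl
    | (k+2), hlt => rw [sg_var_ge] at h; exact absurd (Lam.var.inj h) (by omega)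

lemma bdd_lam_inv {m : ℕ} {a : Lam} (h : Bdd m (Lam.lam a)) : Bdd (m+1) a := by
  cases h with
  | lam h1 => exact h1

lemma bdd_app_inv {m : ℕ} {a b : Lam} (h : Bdd m (Lam.app a b)) : Bdd m a ∧ Bdd m b := by
  cases h with
  | app h1 h2 => exact ⟨h1, h2⟩

/-- Key recursive lemma: pulling a standard reduction to a numeral back through `sg`. -/
lemma lemC {m : ℕ} : ∀ (n : ℕ) (e : Lam), Bdd (m+2) e → Sred (sg m e) (cm m n) →
    BetaStar e (Cb n) := by
  intro n
  induction n with
  | zero =>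
    intro e hb h
    have hw := sred_inv_var (by exact h)
    obtain ⟨e', he, hsg⟩ := whrStar_reflect_sg hw
    have : e' = Lam.var 0 := sg_eq_var_m (bdd_whrStar he hb) hsg.symm
    subst this
    exact whrStar_betaStar he
  | succ n ih =>
    intro e hb h
    obtain ⟨p, q, hw, hp, hq⟩ := sred_inv_app (by exact h)
    obtain ⟨e₀, he₀, hsg⟩ := whrStar_reflect_sg hw
    obtain ⟨A, B, hAB, hpA, hqB⟩ := sg_eq_app hsg.symm
    subst hAB
    have hbdd := bdd_app_inv (bdd_whrStar he₀ hb)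
    -- A side
    have hwA : WhrStar (sg m A) (Lam.var (m+1)) := by
      rw [← hpA]; exact sred_inv_var hp
    obtain ⟨A', hA', hsgA⟩ := whrStar_reflect_sg hwA
    have hA'eq : A' = Lam.var 1 := sg_eq_var_m1 (bdd_whrStar hA' hbdd.1) hsgA.symm
    -- B side
    have hB : BetaStar B (Cb n) := ih B hbdd.2 (by rw [hqB] at hq; exact hq)
    have h1 : BetaStar e (Lam.app A B) := whrStar_betaStar he₀
    have hAstar : BetaStar A (Lam.var 1) := by
      rw [← hA'eq]; exact whrStar_betaStar hA'
    show BetaStar e (Lam.app (Lam.var 1) (Cb n))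
    exact h1.trans (betaStar_app hAstar hB)

/-- Main combinatorial analysis. -/
lemma main_analysis {t : Lam} {m n : ℕ} (hb : Bdd m t)
    (h : Sred (Lam.app (Lam.app t (Lam.var (m+1))) (Lam.var m)) (cm m n)) :
    BetaStar t (Lam.lam (Lam.var 0)) ∨ ∃ n', BetaStar t (Lam.lam (Lam.lam (Cb n'))) := by
  cases n with
  | zero =>
    have hw : WhrStar (Lam.app (Lam.app t (Lam.var (m+1))) (Lam.var m)) (Lam.var m) :=
      sred_inv_var h
    rcases whrStar_app_track hw _ _ rfl with ⟨p, hne, _⟩ | ⟨b, hS, hsub⟩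
    · exact Lam.noConfusion hne
    · rcases whrStar_app_track hS _ _ rfl with ⟨p, hne, _⟩ | ⟨a, hT, hsub2⟩
      · exact Lam.noConfusion hne
      · obtain ⟨a', ha', heq⟩ := whrStar_reflect hsub2
        obtain ⟨a₂, ha₂, hbval⟩ := subst_eq_lam heq.symm
        subst ha₂
        -- b = subst a₂ 1 (var (m+1+1)), so subst b 0 (var m) = sg m a₂
        have hbdd2 : Bdd (m+2) a₂ := by
          have h1 : Bdd m (Lam.lam a) := bdd_whrStar hT hb
          have h2 : Bdd (m+1) a := bdd_lam_inv h1
          have h3 : Bdd (m+1) (Lam.lam a₂) := bdd_whrStar ha' h2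
          exact bdd_lam_inv h3
        have hsg : Sred (sg m a₂) (cm m 0) := by
          have : subst b 0 (Lam.var m) = sg m a₂ := by rw [hbval]; rfl
          rw [← this]
          exact Sred.var hsub
        have := lemC 0 a₂ hbdd2 hsg
        refine Or.inr ⟨0, ?_⟩
        have h1 : BetaStar t (Lam.lam (Lam.lam a₂)) :=
          (whrStar_betaStar hT).trans (betaStar_lam (whrStar_betaStar ha'))
        exact h1.trans (betaStar_lam (betaStar_lam this))
  | succ n =>
    obtain ⟨p, q, hw, hp, hq⟩ := sred_inv_app h
    rcases whrStar_app_track hw _ _ rfl with ⟨p', hne, hSp⟩ | ⟨b, hS, hsub⟩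
    · -- q = var m, p' = p
      injection hne with hne1 hne2
      subst hne1; subst hne2
      -- Sred (var m) (cm m n) forces n = 0
      cases n with
      | succ n' =>
        obtain ⟨p₂, q₂, hvw, _, _⟩ := sred_inv_app hq
        exact Lam.noConfusion (whrStar_var hvw)
      | zero =>
        have hSv : WhrStar (Lam.app t (Lam.var (m+1))) (Lam.var (m+1)) :=
          sred_inv_var (sred_whr_prepend hSp hp)
        rcases whrStar_app_track hSv _ _ rfl with ⟨p'', hne, _⟩ | ⟨a, hT, hsub2⟩
        · exact Lam.noConfusion hne
        · obtain ⟨a', ha', heq⟩ := whrStar_reflect hsub2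
          obtain ⟨n₀, hn₀⟩ := subst_eq_var heq.symm
          subst hn₀
          have hbdd2 : Bdd (m+1) (Lam.var n₀) := by
            have h1 : Bdd m (Lam.lam a) := bdd_whrStar hT hb
            exact bdd_whrStar ha' (bdd_lam_inv h1)
          have hn0 : n₀ = 0 := by
            cases n₀ with
            | zero => rfl
            | succ k =>
              have : subst (Lam.var (k+1)) 0 (Lam.var (m+1)) = Lam.var k := by
                simp [subst]
              rw [this] at heq
              have hk := Lam.var.inj heq
              cases hbdd2 with
              | var hlt => omega
          subst hn0
          refine Or.inl ?_
          have h1 : BetaStar t (Lam.lam a) := whrStar_betaStar hT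
          exact h1.trans (betaStar_lam (whrStar_betaStar ha'))
    · -- head contraction happened: t reduces to a double lambda
      rcases whrStar_app_track hS _ _ rfl with ⟨p'', hne, _⟩ | ⟨a, hT, hsub2⟩
      · exact Lam.noConfusion hne
      · obtain ⟨a', ha', heq⟩ := whrStar_reflect hsub2
        obtain ⟨a₂, ha₂, hbval⟩ := subst_eq_lam heq.symm
        subst ha₂
        have hbdd2 : Bdd (m+2) a₂ := by
          have h1 : Bdd m (Lam.lam a) := bdd_whrStar hT hb
          have h2 : Bdd (m+1) a := bdd_lam_inv h1
          have h3 : Bdd (m+1) (Lam.lam a₂) := bdd_whrStar ha' h2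
          exact bdd_lam_inv h3
        have hsg : Sred (sg m a₂) (cm m (n+1)) := by
          have heq2 : subst b 0 (Lam.var m) = sg m a₂ := by rw [hbval]; rfl
          rw [← heq2]
          exact Sred.app hsub hp hq
        have := lemC (n+1) a₂ hbdd2 hsg
        refine Or.inr ⟨n+1, ?_⟩
        have h1 : BetaStar t (Lam.lam (Lam.lam a₂)) :=
          (whrStar_betaStar hT).trans (betaStar_lam (whrStar_betaStar ha'))
        exact h1.trans (betaStar_lam (betaStar_lam this))

end EntProof
namespace EntProof
open Lam

lemma mem_interp_Ent {t : Lam} {I : Interp} :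
    t ∈ interpC Saturated Ent I ↔
      ∀ G : Set Lam, Saturated G →
        t ∈ arrowSet (arrowSet G G) (arrowSet G G) := by
  constructor
  · intro h G hG
    have h1 := Set.mem_iInter.mp h G
    exact Set.mem_iInter.mp h1 hG
  · intro h
    apply Set.mem_iInter.mpr
    intro G
    apply Set.mem_iInter.mpr
    intro hG
    exact h G hG

lemma semC_core {G : Set Lam} {f x : Lam} (hG : Saturated G)
    (hf : f ∈ arrowSet G G) (hx : x ∈ G) :
    ∀ (n : ℕ) (s : Lam), Sred s (Cb n) →
      subst (subst s 1 (lift 0 f)) 0 x ∈ G := by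
  intro n
  induction n with
  | zero =>
    intro s hs
    have hw : WhrStar s (Lam.var 0) := sred_inv_var hs
    have h1 : WhrStar (subst (subst s 1 (lift 0 f)) 0 x)
        (subst (subst (Lam.var 0) 1 (lift 0 f)) 0 x) :=
      whrStar_subst (whrStar_subst hw 1 (lift 0 f)) 0 x
    have e : subst (subst (Lam.var 0) 1 (lift 0 f)) 0 x = x := by simp [subst]
    rw [e] at h1
    exact hG _ _ h1 hx
  | succ n ih =>
    intro s hs
    obtain ⟨u, v, hw, hu, hv⟩ := sred_inv_app hs
    have h1 : WhrStar (subst (subst s 1 (lift 0 f)) 0 x)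
        (subst (subst (Lam.app u v) 1 (lift 0 f)) 0 x) :=
      whrStar_subst (whrStar_subst hw 1 (lift 0 f)) 0 x
    have e : subst (subst (Lam.app u v) 1 (lift 0 f)) 0 x
        = Lam.app (subst (subst u 1 (lift 0 f)) 0 x) (subst (subst v 1 (lift 0 f)) 0 x) := by
      simp [subst]
    rw [e] at h1
    have hu1 : WhrStar (subst (subst u 1 (lift 0 f)) 0 x)
        (subst (subst (Lam.var 1) 1 (lift 0 f)) 0 x) :=
      whrStar_subst (whrStar_subst (sred_inv_var hu) 1 (lift 0 f)) 0 x
    have e2 : subst (subst (Lam.var 1) 1 (lift 0 f)) 0 x = f := by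
      have : subst (Lam.var 1) 1 (lift 0 f) = lift 0 f := by simp [subst]
      rw [this, subst_lift]
    rw [e2] at hu1
    have h2 : WhrStar (Lam.app (subst (subst u 1 (lift 0 f)) 0 x) (subst (subst v 1 (lift 0 f)) 0 x))
        (Lam.app f (subst (subst v 1 (lift 0 f)) 0 x)) := whrStar_appL _ hu1
    have h3 : Lam.app f (subst (subst v 1 (lift 0 f)) 0 x) ∈ G := hf _ (ih v hv)
    exact hG _ _ (h1.trans h2) h3

lemma sem_core {t : Lam}
    (h : BetaStar t (Lam.lam (Lam.var 0)) ∨ ∃ n, BetaStar t (Lam.lam (Lam.lam (Cb n)))) :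
    t ∈ Sem Ent := by
  intro I _
  apply mem_interp_Ent.mpr
  intro G hG
  intro f hf x hx
  show Lam.app (Lam.app t f) x ∈ G
  rcases h with h | ⟨n, h⟩
  · obtain ⟨s₀, hw0, hs0⟩ := sred_inv_lam (sred_of_betaStar h)
    have hsv : WhrStar s₀ (Lam.var 0) := sred_inv_var hs0
    have h1 : WhrStar (Lam.app (Lam.app t f) x) (Lam.app (Lam.app (Lam.lam s₀) f) x) :=
      whrStar_appL _ (whrStar_appL _ hw0)
    have h2 : Whr (Lam.app (Lam.app (Lam.lam s₀) f) x) (Lam.app (subst s₀ 0 f) x) :=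
      Whr.appL _ (Whr.head s₀ f)
    have h3 : WhrStar (Lam.app (subst s₀ 0 f) x) (Lam.app (subst (Lam.var 0) 0 f) x) :=
      whrStar_appL _ (whrStar_subst hsv 0 f)
    have e : subst (Lam.var 0) 0 f = f := by simp [subst]
    rw [e] at h3
    have hfx : Lam.app f x ∈ G := hf _ hx
    exact hG _ _ (((h1.tail h2).trans h3)) hfx
  · obtain ⟨s₀, hw0, hs0⟩ := sred_inv_lam (sred_of_betaStar h)
    obtain ⟨s₁, hw1, hs1⟩ := sred_inv_lam hs0
    have h1 : WhrStar (Lam.app (Lam.app t f) x) (Lam.app (Lam.app (Lam.lam s₀) f) x) :=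
      whrStar_appL _ (whrStar_appL _ hw0)
    have h2 : Whr (Lam.app (Lam.app (Lam.lam s₀) f) x) (Lam.app (subst s₀ 0 f) x) :=
      Whr.appL _ (Whr.head s₀ f)
    have h3 : WhrStar (Lam.app (subst s₀ 0 f) x) (Lam.app (subst (Lam.lam s₁) 0 f) x) :=
      whrStar_appL _ (whrStar_subst hw1 0 f)
    have e : subst (Lam.lam s₁) 0 f = Lam.lam (subst s₁ 1 (lift 0 f)) := by
      simp [subst]
    rw [e] at h3
    have h4 : Whr (Lam.app (Lam.lam (subst s₁ 1 (lift 0 f))) x)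
        (subst (subst s₁ 1 (lift 0 f)) 0 x) := Whr.head _ _
    have h5 : subst (subst s₁ 1 (lift 0 f)) 0 x ∈ G := semC_core hG hf hx n s₁ hs1
    exact hG _ _ (((h1.tail h2).trans h3).tail h4) h5

/-! ### The numeral-target saturated set -/

def Gcn (m : ℕ) : Set Lam := {u | ∃ n, BetaStar u (cm m n)}

lemma sat_Gcn (m : ℕ) : Saturated (Gcn m) := by
  intro t u hw hu
  obtain ⟨n, hn⟩ := hu
  exact ⟨n, (whrStar_betaStar hw).trans hn⟩

lemma f_mem_Gcn (m : ℕ) : Lam.var (m+1) ∈ arrowSet (Gcn m) (Gcn m) := by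
  intro u hu
  obtain ⟨n, hn⟩ := hu
  exact ⟨n+1, betaStar_appR _ hn⟩

lemma x_mem_Gcn (m : ℕ) : Lam.var m ∈ Gcn m := ⟨0, Relation.ReflTransGen.refl⟩

end EntProof
namespace EntProof
open Lam

/-! ### Interpretation environment lemmas -/

def insertAt (d : ℕ) (G : Set Lam) (I : Interp) : Interp := fun n =>
  if n < d then I n else if n = d then G else I (n-1)

lemma insertAt_zero (G : Set Lam) (I : Interp) : insertAt 0 G I = Interp.cons G I := by
  funext n
  cases n with
  | zero => simp [insertAt, Interp.cons]
  | succ n => simp [insertAt, Interp.cons]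

lemma cons_insertAt (H G : Set Lam) (d : ℕ) (I : Interp) :
    Interp.cons H (insertAt d G I) = insertAt (d+1) G (Interp.cons H I) := by
  funext n
  cases n with
  | zero => simp [insertAt, Interp.cons]
  | succ n =>
    simp only [Interp.cons, insertAt]
    rcases Nat.lt_trichotomy n d with h | h | h
    · have h1 : n + 1 < d + 1 := by omega
      simp [h, h1, Interp.cons]
    · subst h
      simp [Interp.cons]
    · have h1 : ¬ n < d := by omega
      have h2 : ¬ n = d := by omega
      have h3 : ¬ n + 1 < d + 1 := by omega
      have h4 : ¬ n + 1 = d + 1 := by omega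
      simp only [h1, h2, h3, h4, if_false]
      have h5 : n - 1 + 1 = n := by omega
      cases n with
      | zero => omega
      | succ k => simp [Interp.cons]

lemma interp_lift {C : Set Lam → Prop} (A : Ty) :
    ∀ (d : ℕ) (G : Set Lam) (I : Interp),
      interpC C (Ty.lift d A) (insertAt d G I) = interpC C A I := by
  induction A with
  | var n =>
    intro d G I
    simp only [Ty.lift]
    split
    · rename_i h
      simp [interpC, insertAt, h]
    · rename_i h
      have h1 : ¬ n + 1 < d := by omega
      have h2 : ¬ n + 1 = d := by omega
      simp [interpC, insertAt, h1, h2]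
  | arr B B' ih1 ih2 =>
    intro d G I
    simp only [Ty.lift, interpC, ih1, ih2]
  | all A ih =>
    intro d G I
    simp only [Ty.lift, interpC]
    apply Set.iInter_congr
    intro H
    apply Set.iInter_congr
    intro _
    rw [cons_insertAt, ih]

lemma interp_subst {C : Set Lam → Prop} (A : Ty) :
    ∀ (k : ℕ) (B : Ty) (I : Interp),
      interpC C (Ty.subst A k B) I = interpC C A (insertAt k (interpC C B I) I) := by
  induction A with
  | var n =>
    intro k B I
    rcases Nat.lt_trichotomy n k with h | h | h
    · have h1 : n ≠ k := by omega
      have h2 : ¬ k < n := by omega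
      have e : Ty.subst (Ty.var n) k B = Ty.var n := by simp [Ty.subst, h1, h2]
      rw [e]
      show I n = insertAt k (interpC C B I) I n
      simp [insertAt, h]
    · subst h
      have e : Ty.subst (Ty.var n) n B = B := by simp [Ty.subst]
      rw [e]
      show interpC C B I = insertAt n (interpC C B I) I n
      simp [insertAt]
    · have h1 : n ≠ k := by omega
      have e : Ty.subst (Ty.var n) k B = Ty.var (n-1) := by simp [Ty.subst, h1, h]
      rw [e]
      show I (n-1) = insertAt k (interpC C B I) I n
      have h2 : ¬ n < k := by omega
      simp [insertAt, h1, h2]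
  | arr B' B'' ih1 ih2 =>
    intro k B I
    simp only [Ty.subst, interpC, ih1, ih2]
  | all A ih =>
    intro k B I
    simp only [Ty.subst, interpC]
    apply Set.iInter_congr
    intro H
    apply Set.iInter_congr
    intro _
    rw [ih]
    have e : interpC C (Ty.lift 0 B) (Interp.cons H I) = interpC C B I := by
      rw [← insertAt_zero H I]
      exact interp_lift B 0 H I
    rw [e, ← cons_insertAt]

lemma cons_sat {G : Set Lam} {I : Interp} (hG : Saturated G) (hI : ∀ n, Saturated (I n)) :
    ∀ n, Saturated (Interp.cons G I n) := by
  intro n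
  cases n with
  | zero => exact hG
  | succ n => exact hI n

lemma interp_sat (A : Ty) : ∀ I : Interp, (∀ n, Saturated (I n)) →
    Saturated (interpC Saturated A I) := by
  induction A with
  | var n => intro I hI; exact hI n
  | arr B B' ih1 ih2 =>
    intro I hI t u hw hu
    intro v hv
    have h1 : WhrStar (Lam.app t v) (Lam.app u v) := whrStar_appL _ hw
    exact ih2 I hI _ _ h1 (hu v hv)
  | all A ih =>
    intro I hI t u hw hu
    apply Set.mem_iInter.mpr
    intro G
    apply Set.mem_iInter.mpr
    intro hG
    have hu' : u ∈ interpC Saturated A (Interp.cons G I) :=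
      Set.mem_iInter.mp (Set.mem_iInter.mp hu G) hG
    exact ih (Interp.cons G I) (cons_sat hG hI) _ _ hw hu'

/-! ### Adequacy -/

lemma adequacy {Γ : Ctx} {a : Lam} {A : Ty} (h : TyJ Γ a A) :
    ∀ I : Interp, (∀ n, Saturated (I n)) →
      ∀ σ : ℕ → Lam, (∀ n B, Γ n = some B → σ n ∈ interpC Saturated B I) →
        msub σ a ∈ interpC Saturated A I := by
  induction h with
  | @var Γ x A hx =>
    intro I hI σ hσ
    exact hσ x A hx
  | @lam Γ B C t _ ih =>
    intro I hI σ hσ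
    intro u hu
    have hstep : Whr (Lam.app (Lam.lam (msub (ups σ) t)) u) (subst (msub (ups σ) t) 0 u) :=
      Whr.head _ _
    rw [subst_msub_ups] at hstep
    have hmem : msub (fun n => match n with | 0 => u | n+1 => σ n) t
        ∈ interpC Saturated C I := by
      apply ih I hI
      intro n B' hn
      cases n with
      | zero =>
        simp only [Ctx.cons] at hn
        injection hn with hn
        subst hn
        exact hu
      | succ n =>
        simp only [Ctx.cons] at hn
        exact hσ n B' hn
    exact interp_sat C I hI _ _ (Relation.ReflTransGen.single hstep) hmem
  | @app Γ B C u v _ _ ih1 ih2 =>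
    intro I hI σ hσ
    exact ih1 I hI σ hσ _ (ih2 I hI σ hσ)
  | @allI Γ A t _ ih =>
    intro I hI σ hσ
    apply Set.mem_iInter.mpr
    intro G
    apply Set.mem_iInter.mpr
    intro hG
    apply ih (Interp.cons G I) (cons_sat hG hI)
    intro n B hn
    simp only [Ctx.liftTy] at hn
    cases hΓ : Γ n with
    | none => rw [hΓ] at hn; simp at hn
    | some B₀ =>
      rw [hΓ] at hn
      simp only [Option.map_some] at hn
      injection hn with hn
      subst hn
      rw [← insertAt_zero G I, interp_lift]
      exact hσ n B₀ hΓ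
  | @allE Γ A t C _ ih =>
    intro I hI σ hσ
    have h1 := ih I hI σ hσ
    rw [interp_subst, insertAt_zero]
    exact Set.mem_iInter.mp
      (Set.mem_iInter.mp h1 (interpC Saturated C I)) (interp_sat C I hI)

lemma adequacy_closed {t : Lam} (h : TyJ Ctx.empty t Ent) : t ∈ Sem Ent := by
  intro I hI
  have h1 := adequacy h I hI Lam.var (by intro n B hn; simp [Ctx.empty] at hn)
  rw [msub_var] at h1
  exact h1

end EntProof
namespace EntProof
open Lam

/-! ### Typing the canonical inhabitants -/

lemma liftTy_empty : Ctx.liftTy Ctx.empty = Ctx.empty := by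
  funext n
  simp [Ctx.liftTy, Ctx.empty]

def ctx2 : Ctx :=
  Ctx.cons (Ty.var 0) (Ctx.cons (Ty.arr (Ty.var 0) (Ty.var 0)) Ctx.empty)

lemma tyj_Cb (n : ℕ) : TyJ ctx2 (Cb n) (Ty.var 0) := by
  induction n with
  | zero => exact TyJ.var rfl
  | succ n ih => exact TyJ.app (TyJ.var rfl) ih

lemma tyj_lamlamCb (n : ℕ) : TyJ Ctx.empty (Lam.lam (Lam.lam (Cb n))) Ent := by
  apply TyJ.allI
  rw [liftTy_empty]
  exact TyJ.lam (TyJ.lam (tyj_Cb n))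

lemma tyj_lamId : TyJ Ctx.empty (Lam.lam (Lam.var 0)) Ent := by
  apply TyJ.allI
  rw [liftTy_empty]
  exact TyJ.lam (TyJ.var rfl)

/-! ### Assembly -/

lemma numeral_target {t : Lam} {m : ℕ} (hb : Bdd m t) (hsem : t ∈ Sem Ent) :
    ∃ n, BetaStar (Lam.app (Lam.app t (Lam.var (m+1))) (Lam.var m)) (cm m n) := by
  have h1 := hsem (fun _ => Gcn m) (fun _ => sat_Gcn m)
  have h2 := mem_interp_Ent.mp h1 (Gcn m) (sat_Gcn m)
  have h3 : Lam.app t (Lam.var (m+1)) ∈ arrowSet (Gcn m) (Gcn m) :=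
    h2 _ (f_mem_Gcn m)
  exact h3 _ (x_mem_Gcn m)

lemma ent_mem_iff (t : Lam) :
    t ∈ Sem Ent ↔ ∃ t', Lam.BetaStar t t' ∧ TyJ Ctx.empty t' Ent := by
  constructor
  · intro h
    obtain ⟨n, hn⟩ := numeral_target (bdd_bound t) h
    rcases main_analysis (bdd_bound t) (sred_of_betaStar hn) with h4 | ⟨n', h4⟩
    · exact ⟨_, h4, tyj_lamId⟩
    · exact ⟨_, h4, tyj_lamlamCb n'⟩
  · rintro ⟨t', ht, hty⟩
    have hsem := adequacy_closed hty
    set m := bound t with hm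
    obtain ⟨n, hn⟩ := numeral_target (bdd_betaStar ht (bdd_bound t)) hsem
    have hred : BetaStar (Lam.app (Lam.app t (Lam.var (m+1))) (Lam.var m)) (cm m n) :=
      (betaStar_appL _ (betaStar_appL _ ht)).trans hn
    exact sem_core (main_analysis (bdd_bound t) (sred_of_betaStar hred))

end EntProof

/-- `t ∈ |Ent|` iff `t` β-reduces to a term of type `Ent`;
in particular `|Ent| = {t : ∃ t', t →_β t' ∧ ⊢_F t' : Ent}`. -/
theorem ent_characterization :
    (∀ t : Lam, t ∈ Sem Ent ↔ ∃ t', Lam.BetaStar t t' ∧ TyJ Ctx.empty t' Ent) ∧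
    Sem Ent = {t : Lam | ∃ t', Lam.BetaStar t t' ∧ TyJ Ctx.empty t' Ent} := by
  refine ⟨EntProof.ent_mem_iff, ?_⟩
  ext t
  exact EntProof.ent_mem_iff t
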